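/- Let H be a Hilbert space, S(t) symmetric and K(t) skew-symmetric operator families, and f a smooth curve with Q(t) = ‖f(t)‖² > 0. Define N(t) = ⟨S(t) f(t), f(t)⟩ / Q(t). Then N'(t) ≥ Q(t)^{-1} [ ⟨S_t f + [S,K] f, f⟩ − (1/2) ‖∂_t f − S f − K f‖² ]. -/

import Mathlib

set_option maxHeartbeats 1000000


open scoped ComplexInnerProductSpace

/-- Lower bound on the derivative of the frequency function
`N(t) = ⟨S(t)f(t), f(t)⟩ / Q(t)` (Lemma 3.2). -/
theorem frequency_function_derivative_lower_bound
    {H : Type*} [NormedAddCommGroup H] [InnerProductSpace ℂ H] [CompleteSpace H]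
    (S K : ℝ → H →L[ℂ] H) (f : ℝ → H)
    (hS : ContDiff ℝ 1 S) (hK : ContDiff ℝ 1 K) (hf : ContDiff ℝ 2 f)
    (hSsymm : ∀ t, ∀ v w : H, ⟪S t v, w⟫ = ⟪v, S t w⟫)
    (hKskew : ∀ t, ∀ v w : H, ⟪K t v, w⟫ = -⟪v, K t w⟫)
    (Q N : ℝ → ℝ)
    (hQ : ∀ t, Q t = ‖f t‖ ^ 2) (hQpos : ∀ t, 0 < Q t)
    (hN : ∀ t, N t = (⟪S t (f t), f t⟫ : ℂ).re / Q t) (t : ℝ) :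
    deriv N t ≥ (Q t)⁻¹ *
      ((⟪(deriv S t) (f t) + (S t ∘L K t - K t ∘L S t) (f t), f t⟫ : ℂ).re
        - (1 / 2) * ‖deriv f t - S t (f t) - K t (f t)‖ ^ 2) := by
  -- derivatives
  have hfd : HasDerivAt f (deriv f t) t := (hf.differentiable two_ne_zero t).hasDerivAt
  have hSd : HasDerivAt S (deriv S t) t := ((hS.differentiable one_ne_zero) t).hasDerivAt
  have hSr : HasDerivAt (fun s => (ContinuousLinearMap.restrictScalarsL ℂ H H ℝ ℝ) (S s))
      ((ContinuousLinearMap.restrictScalarsL ℂ H H ℝ ℝ) (deriv S t)) t :=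
    (ContinuousLinearMap.restrictScalarsL ℂ H H ℝ ℝ).hasFDerivAt.comp_hasDerivAt t hSd
  have hSf : HasDerivAt (fun s => S s (f s)) ((deriv S t) (f t) + S t (deriv f t)) t :=
    hSr.clm_apply hfd
  -- abbreviations
  set x := f t with hx
  set x' := deriv f t with hx'
  set A := S t with hA
  set A' := deriv S t with hA'
  set B := K t with hB
  set r := x' - A x - B x with hr
  have hxr : x' = A x + B x + r := by rw [hr]; abel
  set q := Q t with hqdef
  have hq : q = ‖x‖ ^ 2 := hQ t
  have hq0 : 0 < q := hQpos t
  have hqne : q ≠ 0 := ne_of_gt hq0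
  set d : ℝ := (⟪A x, x⟫ : ℂ).re with hd
  set a' : ℝ := (⟪A' x, x⟫ : ℂ).re with ha'
  set α : ℝ := ‖A x‖ ^ 2 with hα
  set β : ℝ := (⟪A x, B x⟫ : ℂ).re with hβ
  set γ : ℝ := (⟪A x, r⟫ : ℂ).re with hγ
  set δ : ℝ := (⟪x, r⟫ : ℂ).re with hδ
  set ρ : ℝ := ‖r‖ ^ 2 with hρ
  -- derivative of D
  have hDc : HasDerivAt (fun s => (⟪S s (f s), f s⟫ : ℂ))
      (⟪A x, x'⟫ + ⟪A' x + A x', x⟫) t := hSf.inner ℂ hfd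
  have hD : HasDerivAt (fun s => (⟪S s (f s), f s⟫ : ℂ).re)
      ((⟪A x, x'⟫ + ⟪A' x + A x', x⟫ : ℂ).re) t :=
    Complex.reCLM.hasFDerivAt.comp_hasDerivAt t hDc
  -- derivative of Q
  have hQc : HasDerivAt (fun s => (⟪f s, f s⟫ : ℂ)) (⟪x, x'⟫ + ⟪x', x⟫) t := hfd.inner ℂ hfd
  have hQfun : Q = fun s => ((⟪f s, f s⟫ : ℂ)).re := by
    funext s
    rw [hQ s, ← @inner_self_eq_norm_sq ℂ]
    simp
  have hQd : HasDerivAt Q ((⟪x, x'⟫ + ⟪x', x⟫ : ℂ).re) t := by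
    rw [hQfun]
    exact Complex.reCLM.hasFDerivAt.comp_hasDerivAt t hQc
  -- derivative of N
  have hNfun : N = fun s => (⟪S s (f s), f s⟫ : ℂ).re / Q s := funext hN
  have hNd : HasDerivAt N
      (((⟪A x, x'⟫ + ⟪A' x + A x', x⟫ : ℂ).re * q - d * (⟪x, x'⟫ + ⟪x', x⟫ : ℂ).re) / q ^ 2) t := by
    rw [hNfun]
    exact hD.div hQd hqne
  rw [hNd.deriv]
  -- compute the two derivative scalars
  have reSymm : ∀ v w : H, (⟪v, w⟫ : ℂ).re = (⟪w, v⟫ : ℂ).re := by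
    intro v w
    simpa using inner_re_symm (𝕜 := ℂ) v w
  have hBx : (⟪B x, x⟫ : ℂ).re = 0 := by
    have h1 := hKskew t x x
    have h2 := reSymm (B x) x
    have : (⟪B x, x⟫ : ℂ).re = -(⟪x, B x⟫ : ℂ).re := by rw [h1]; simp; rfl
    linarith [this, h2.symm ▸ this]
  have hAxx' : (⟪A x, x'⟫ : ℂ).re = α + β + γ := by
    rw [hxr, inner_add_right, inner_add_right]
    simp only [Complex.add_re]
    rw [hα, ← @inner_self_eq_norm_sq ℂ]
    simp [hβ, hγ]
  have hD' : (⟪A x, x'⟫ + ⟪A' x + A x', x⟫ : ℂ).re = a' + 2 * (α + β + γ) := by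
    have h1 : (⟪A x', x⟫ : ℂ).re = (⟪A x, x'⟫ : ℂ).re := by
      rw [hSsymm t x' x, reSymm]
    simp only [inner_add_left, Complex.add_re]
    rw [h1, hAxx', ha']
    ring
  have hQ' : (⟪x, x'⟫ + ⟪x', x⟫ : ℂ).re = 2 * (d + δ) := by
    have h1 : (⟪x', x⟫ : ℂ).re = (⟪x, x'⟫ : ℂ).re := reSymm x' x
    have h2 : (⟪x, x'⟫ : ℂ).re = d + δ := by
      rw [hxr, inner_add_right, inner_add_right]
      have hxa : (⟪x, A x⟫ : ℂ).re = d := by rw [hd]; exact (reSymm (A x) x).symm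
      have hxb : (⟪x, B x⟫ : ℂ).re = 0 := by rw [reSymm x (B x)]; exact hBx
      simp [hxa, hxb, hδ]
    simp only [Complex.add_re]
    rw [h1, h2]; ring
  -- the RHS inner product
  have hRHS : (⟪A' x + (A ∘L B - B ∘L A) x, x⟫ : ℂ).re = a' + 2 * β := by
    have h1 : (⟪A (B x), x⟫ : ℂ).re = β := by
      rw [hSsymm t (B x) x, reSymm]
    have h2 : (⟪B (A x), x⟫ : ℂ).re = -β := by
      rw [hKskew t (A x) x]
      simp [hβ]; rfl
    simp only [ContinuousLinearMap.sub_apply, ContinuousLinearMap.comp_apply,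
      inner_add_left, inner_sub_left, Complex.add_re, Complex.sub_re]
    rw [h1, h2, ha']
    ring
  rw [hRHS, hD', hQ']
  -- the positivity part
  set m : ℝ := d / q with hm
  have hmq : m * q = d := div_mul_cancel₀ d hqne
  set p : H := A x - (m : ℂ) • x with hp
  have hp2 : ‖p‖ ^ 2 = α - 2 * m * d + m ^ 2 * q := by
    rw [hp, @norm_sub_sq ℂ, inner_smul_right]
    simp only [norm_smul, Complex.norm_real]
    rw [hq, hα, hd]
    simp [Complex.mul_re, mul_pow, sq_abs]
    ring
  have hpr : (⟪p, r⟫ : ℂ).re = γ - m * δ := by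
    rw [hp, inner_sub_left, inner_smul_left]
    simp [hγ, hδ, Complex.mul_re]
  have key : 0 ≤ 4 * ‖p‖ ^ 2 + 4 * (⟪p, r⟫ : ℂ).re + ρ := by
    have h0 : (0:ℝ) ≤ ‖(2:ℂ) • p + r‖ ^ 2 := sq_nonneg _
    have hexp : ‖(2:ℂ) • p + r‖ ^ 2 = 4 * ‖p‖ ^ 2 + 4 * (⟪p, r⟫ : ℂ).re + ρ := by
      rw [@norm_add_sq ℂ, inner_smul_left, norm_smul]
      simp [hρ, Complex.mul_re, mul_pow]
      ring
    linarith [hexp ▸ h0]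
  rw [ge_iff_le, ← sub_nonneg]
  have heq : ((a' + 2 * (α + β + γ)) * q - d * (2 * (d + δ))) / q ^ 2
      - q⁻¹ * (a' + 2 * β - 1 / 2 * ρ)
      = ((2 * α + 2 * γ) * q - d * (2 * d + 2 * δ) + q * ρ / 2) / q ^ 2 := by
    field_simp
    ring
  rw [heq]
  apply div_nonneg _ (sq_nonneg q)
  rw [hp2, hpr] at key
  have keyq : 0 ≤ (4 * (α - 2 * m * d + m ^ 2 * q) + 4 * (γ - m * δ) + ρ) * q :=
    mul_nonneg key hq0.le
  have h1 : m ^ 2 * q * q = d * d := by rw [← hmq]; ring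
  have h2 : m * d * q = d * d := by rw [← hmq]; ring
  have h3 : m * δ * q = d * δ := by rw [← hmq]; ring
  nlinarith [keyq, h1, h2, h3]
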